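/- Let α and β be n-cycles in the symmetric group S_{n+1}. Then there exists a natural number d with 1 ≤ d ≤ n−1 such that α·β^d is not an n-cycle. -/
import Mathlib


/-- An `n`-cycle in `S_{n+1}`: a cyclic permutation whose support has `n` points. -/
def IsNCycle {m : ℕ} (σ : Equiv.Perm (Fin m)) (n : ℕ) : Prop :=
  σ.IsCycle ∧ σ.support.card = n

theorem stmt_0 (n : ℕ) (α β : Equiv.Perm (Fin (n + 1)))
    (hα : IsNCycle α n) (hβ : IsNCycle β n) :
    ∃ d : ℕ, 1 ≤ d ∧ d ≤ n - 1 ∧ ¬ IsNCycle (α * β ^ d) n := by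
  have h2 : 2 ≤ n := hα.2 ▸ hα.1.two_le_card_support
  by_contra hcon
  push_neg at hcon
  have H : ∀ d < n, IsNCycle (α * β ^ d) n := by
    intro d hd
    rcases Nat.eq_zero_or_pos d with rfl | hd1
    · simpa using hα
    · exact hcon d hd1 (by omega)
  have hord : orderOf β = n := by rw [hβ.1.orderOf, hβ.2]
  -- fixed point set of a permutation with support of card n has exactly one element
  have hfix : ∀ σ : Equiv.Perm (Fin (n+1)), σ.support.card = n →
      (Finset.univ.filter fun x => σ x = x).card = 1 := by
    intro σ hσ
    have h1 := Finset.card_filter_add_card_filter_not (s := Finset.univ)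
      (p := fun x => σ x = x)
    have hs : (Finset.univ.filter fun x => ¬ σ x = x) = σ.support := by
      ext x; simp [Equiv.Perm.mem_support]
    rw [hs, hσ, Finset.card_univ, Fintype.card_fin] at h1
    omega
  -- the fixed point of β
  obtain ⟨b, hb⟩ := Finset.card_eq_one.mp (hfix β hβ.2)
  have hbfix : β b = b := by
    have : b ∈ Finset.univ.filter fun x => β x = x := hb ▸ Finset.mem_singleton_self b
    simpa using this
  have hsuppb : ∀ x : Fin (n+1), x ∈ β.support ↔ x ≠ b := by
    intro x
    constructor
    · intro hx hxb; subst hxb; exact (Equiv.Perm.mem_support.mp hx) hbfix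
    · intro hx
      by_contra hns
      have : x ∈ Finset.univ.filter fun y => β y = y := by
        simp only [Finset.mem_filter, Finset.mem_univ, true_and]
        by_contra h; exact hns (Equiv.Perm.mem_support.mpr h)
      rw [hb, Finset.mem_singleton] at this
      exact hx this
  have hbpow : ∀ d : ℕ, (β ^ d) b = b := fun d => by
    induction d with
    | zero => simp
    | succ k ih => rw [pow_succ, Equiv.Perm.mul_apply, hbfix, ih]
  -- total count of fixed points of α * β^d over d < n, way 1
  have hT1 : ∑ d ∈ Finset.range n, (Finset.univ.filter fun x => (α * β ^ d) x = x).card = n := by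
    rw [Finset.sum_congr rfl fun d hd => hfix _ (H d (Finset.mem_range.mp hd)).2]
    simp
  -- way 2: swap summation
  have hT2 : ∑ d ∈ Finset.range n, (Finset.univ.filter fun x => (α * β ^ d) x = x).card
      = ∑ x : Fin (n+1), ((Finset.range n).filter fun d => (β ^ d) x = α⁻¹ x).card := by
    simp_rw [Finset.card_filter]
    rw [Finset.sum_comm]
    refine Finset.sum_congr rfl fun x _ => Finset.sum_congr rfl fun d _ => ?_
    congr 1
    simp only [Equiv.Perm.mul_apply, eq_iff_iff]
    exact Equiv.Perm.eq_inv_iff_eq.symm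
  -- uniqueness of the exponent
  have huniq : ∀ x : Fin (n+1), x ∈ β.support → ∀ d < n, ∀ e < n,
      (β ^ d) x = (β ^ e) x → d = e := by
    have main : ∀ x : Fin (n+1), x ∈ β.support → ∀ d < n, ∀ e < n,
        d ≤ e → (β ^ d) x = (β ^ e) x → d = e := by
      intro x hxs d hd e he hle hde
      have heq : (β ^ (e - d)) ((β ^ d) x) = (β ^ d) x := by
        rw [← Equiv.Perm.mul_apply, ← pow_add, Nat.sub_add_cancel hle, ← hde]
      have hmem : (β ^ d) x ∈ β.support := Equiv.Perm.pow_apply_mem_support.mpr hxs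
      have hone := (hβ.1.pow_eq_one_iff' (Equiv.Perm.mem_support.mp hmem)).mpr heq
      have hdvd := orderOf_dvd_of_pow_eq_one hone
      rw [hord] at hdvd
      rcases hdvd with ⟨k, hk⟩
      rcases Nat.eq_zero_or_pos k with rfl | hkpos
      · omega
      · have : n ≤ e - d := by
          calc n = n * 1 := (Nat.mul_one n).symm
          _ ≤ n * k := Nat.mul_le_mul_left n hkpos
          _ = e - d := hk.symm
        omega
    intro x hxs d hd e he hde
    rcases le_total d e with hle | hle
    · exact main x hxs d hd e he hle hde
    · exact (main x hxs e he d hd hle hde.symm).symm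
  -- the per-point count
  have key : ∀ x : Fin (n+1),
      ((Finset.range n).filter fun d => (β ^ d) x = α⁻¹ x).card
      = if x = b then (if α b = b then n else 0)
        else (if α⁻¹ x = b then 0 else 1) := by
    intro x
    by_cases hxb : x = b
    · rw [hxb, if_pos rfl]
      by_cases hab : α b = b
      · have hib : α⁻¹ b = b := (Equiv.Perm.eq_inv_iff_eq.mpr hab).symm
        rw [if_pos hab]
        rw [Finset.filter_true_of_mem fun d _ => by rw [hbpow, hib]]
        simp
      · have hib : α⁻¹ b ≠ b := fun h => hab (Equiv.Perm.eq_inv_iff_eq.mp h.symm)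
        rw [if_neg hab]
        rw [Finset.filter_false_of_mem fun d _ => by rw [hbpow]; exact fun hc => hib hc.symm]
        simp
    · have hxs : x ∈ β.support := (hsuppb x).mpr hxb
      rw [if_neg hxb]
      by_cases hy : α⁻¹ x = b
      · rw [if_pos hy]
        rw [Finset.filter_false_of_mem, Finset.card_empty]
        intro d _ hcontra
        have hm : (β ^ d) x ∈ β.support := Equiv.Perm.pow_apply_mem_support.mpr hxs
        rw [hcontra, hy] at hm
        exact ((hsuppb b).mp hm) rfl
      · rw [if_neg hy]
        have hys : (α⁻¹ x) ∈ β.support := (hsuppb _).mpr hy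
        obtain ⟨i, hi⟩ := hβ.1.exists_pow_eq (Equiv.Perm.mem_support.mp hxs)
          (Equiv.Perm.mem_support.mp hys)
        have hsc : β.SameCycle x (α⁻¹ x) := ⟨(i : ℤ), by simpa using hi⟩
        obtain ⟨j, hjlt, hj⟩ := hsc.exists_pow_eq'
        rw [hord] at hjlt
        rw [Finset.card_eq_one]
        refine ⟨j, ?_⟩
        ext d
        simp only [Finset.mem_filter, Finset.mem_range, Finset.mem_singleton]
        constructor
        · rintro ⟨hdlt, hd⟩
          exact huniq x hxs d hdlt j hjlt (by rw [hd, hj])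
        · rintro rfl
          exact ⟨hjlt, hj⟩
  -- now compute the total sum
  rw [hT2] at hT1
  rw [Finset.sum_congr rfl fun x _ => key x] at hT1
  rw [← Finset.sum_erase_add _ _ (Finset.mem_univ b)] at hT1
  rw [if_pos rfl] at hT1
  have herase : ∀ x ∈ Finset.univ.erase b,
      (if x = b then (if α b = b then n else 0) else (if α⁻¹ x = b then 0 else 1))
      = if α⁻¹ x = b then 0 else 1 := by
    intro x hx
    rw [if_neg (Finset.mem_erase.mp hx).1]
  rw [Finset.sum_congr rfl herase] at hT1
  have hcard_erase : (Finset.univ.erase b).card = n := by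
    rw [Finset.card_erase_of_mem (Finset.mem_univ b), Finset.card_univ, Fintype.card_fin]
    omega
  by_cases hab : α b = b
  · have hall : ∀ x ∈ Finset.univ.erase b, (if α⁻¹ x = b then (0:ℕ) else 1) = 1 := by
      intro x hx
      rw [if_neg]
      intro h
      have : x = α b := by rw [← h]; simp
      exact (Finset.mem_erase.mp hx).1 (this.trans hab)
    rw [Finset.sum_congr rfl hall, if_pos hab, Finset.sum_const, hcard_erase] at hT1
    simp at hT1
    omega
  · have hαb : α b ∈ Finset.univ.erase b := by
      simp [Finset.mem_erase, hab]
    rw [← Finset.sum_erase_add _ _ hαb] at hT1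
    have hzero : (if α⁻¹ (α b) = b then (0:ℕ) else 1) = 0 := by
      rw [if_pos]; simp
    have hones : ∀ x ∈ (Finset.univ.erase b).erase (α b), (if α⁻¹ x = b then (0:ℕ) else 1) = 1 := by
      intro x hx
      rw [if_neg]
      intro h
      have : x = α b := by rw [← h]; simp
      exact (Finset.mem_erase.mp hx).1 this
    rw [hzero, Finset.sum_congr rfl hones, Finset.sum_const, if_neg hab,
      Finset.card_erase_of_mem hαb, hcard_erase] at hT1
    simp at hT1
    omega
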